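/- The Φ-trigonometric functions satisfy the supersymmetric Pythagorean identity C(x₀,x)·C̃(x₀,x) + S(x₀,x)·S̃(x₀,x) = 1 for all x₀, x ∈ [a,b]. -/

import Mathlib

noncomputable def genX (Φ : ℝ → ℂ) : ℕ → ℝ → ℝ → ℂ
  | 0 => fun _ _ => 1
  | n + 1 => fun x₀ x =>
      (n + 1 : ℕ) * ∫ ξ in x₀..x, genX Φ n x₀ ξ * Φ ξ ^ ((-1 : ℤ) ^ (n + 1))

noncomputable def genXt (Φ : ℝ → ℂ) : ℕ → ℝ → ℝ → ℂ
  | 0 => fun _ _ => 1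
  | n + 1 => fun x₀ x =>
      (n + 1 : ℕ) * ∫ ξ in x₀..x, genXt Φ n x₀ ξ * Φ ξ ^ (-((-1 : ℤ) ^ (n + 1)))

noncomputable def genC (Φ : ℝ → ℂ) (x₀ x : ℝ) : ℂ :=
  ∑' j : ℕ, (-1 : ℂ) ^ j * genX Φ (2 * j) x₀ x / ((2 * j).factorial : ℂ)

noncomputable def genCt (Φ : ℝ → ℂ) (x₀ x : ℝ) : ℂ :=
  ∑' k : ℕ, (-1 : ℂ) ^ k * genXt Φ (2 * k) x₀ x / ((2 * k).factorial : ℂ)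

noncomputable def genS (Φ : ℝ → ℂ) (x₀ x : ℝ) : ℂ :=
  ∑' j : ℕ, (-1 : ℂ) ^ j * genX Φ (2 * j + 1) x₀ x / ((2 * j + 1).factorial : ℂ)

noncomputable def genSt (Φ : ℝ → ℂ) (x₀ x : ℝ) : ℂ :=
  ∑' k : ℕ, (-1 : ℂ) ^ k * genXt Φ (2 * k + 1) x₀ x / ((2 * k + 1).factorial : ℂ)

/-! ### Auxiliary lemmas -/

lemma genXt_eq_genX_inv (Φ : ℝ → ℂ) : ∀ (n : ℕ) (x₀ x : ℝ),
    genXt Φ n x₀ x = genX (fun t => (Φ t)⁻¹) n x₀ x := by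
  intro n
  induction n with
  | zero => intro x₀ x; rfl
  | succ n ih =>
      intro x₀ x
      simp only [genXt, genX]
      congr 1
      apply intervalIntegral.integral_congr
      intro ξ _
      dsimp only
      rw [ih x₀ ξ, inv_zpow, ← zpow_neg]

lemma genX_congr {Φ Φ' : ℝ → ℂ} {a b : ℝ} (h : ∀ y ∈ Set.Icc a b, Φ y = Φ' y)
    {x₀ : ℝ} (hx₀ : x₀ ∈ Set.Icc a b) : ∀ (n : ℕ), ∀ x ∈ Set.Icc a b,
    genX Φ n x₀ x = genX Φ' n x₀ x := by
  intro n
  induction n with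
  | zero => intro x _; rfl
  | succ n ih =>
      intro x hx
      simp only [genX]
      congr 1
      apply intervalIntegral.integral_congr
      intro ξ hξ
      have hξ' : ξ ∈ Set.Icc a b := Set.uIcc_subset_Icc hx₀ hx hξ
      dsimp only
      rw [ih ξ hξ', h ξ hξ']

lemma neg_one_zpow_even_nat (z : ℂ) (j : ℕ) : z ^ ((-1 : ℤ) ^ (2 * j)) = z := by
  rw [Even.neg_one_pow ⟨j, by ring⟩, zpow_one]

lemma neg_one_zpow_odd_nat (z : ℂ) (j : ℕ) : z ^ ((-1 : ℤ) ^ (2 * j + 1)) = z⁻¹ := by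
  rw [Odd.neg_one_pow ⟨j, by ring⟩, zpow_neg, zpow_one]

lemma genX_succ_self (Φ : ℝ → ℂ) (n : ℕ) (x₀ : ℝ) : genX Φ (n + 1) x₀ x₀ = 0 := by
  simp [genX]

lemma genC_self (Φ : ℝ → ℂ) (x₀ : ℝ) : genC Φ x₀ x₀ = 1 := by
  rw [genC, tsum_eq_single 0]
  · norm_num [genX]
  · intro j hj
    obtain ⟨i, rfl⟩ : ∃ i, j = i + 1 := ⟨j - 1, by omega⟩
    rw [show 2 * (i + 1) = (2 * i + 1) + 1 from by ring, genX_succ_self]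
    simp

lemma genS_self (Φ : ℝ → ℂ) (x₀ : ℝ) : genS Φ x₀ x₀ = 0 := by
  rw [genS]
  have h : ∀ j : ℕ, (-1 : ℂ) ^ j * genX Φ (2 * j + 1) x₀ x₀ / ((2 * j + 1).factorial : ℂ) = 0 := by
    intro j; rw [genX_succ_self]; simp
  rw [tsum_congr h, tsum_zero]

section Nice

variable {Ψ : ℝ → ℂ} {M : ℝ}

lemma contPow (hc : Continuous Ψ) (h0 : ∀ t, Ψ t ≠ 0) (k : ℤ) :
    Continuous fun t => Ψ t ^ k :=
  hc.zpow₀ k fun t => Or.inl (h0 t)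

lemma genX_continuous (hc : Continuous Ψ) (h0 : ∀ t, Ψ t ≠ 0) (x₀ : ℝ) :
    ∀ n, Continuous (genX Ψ n x₀) := by
  intro n
  induction n with
  | zero => exact continuous_const
  | succ n ih =>
      have hcf : Continuous fun ξ => genX Ψ n x₀ ξ * Ψ ξ ^ ((-1 : ℤ) ^ (n + 1)) :=
        ih.mul (contPow hc h0 _)
      have : Continuous fun x => ∫ ξ in x₀..x, genX Ψ n x₀ ξ * Ψ ξ ^ ((-1 : ℤ) ^ (n + 1)) := by
        apply continuous_iff_continuousAt.2
        intro x
        exact ((hcf.integral_hasStrictDerivAt x₀ x).hasDerivAt).continuousAt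
      exact continuous_const.mul this

lemma genX_hasDerivAt (hc : Continuous Ψ) (h0 : ∀ t, Ψ t ≠ 0) (x₀ : ℝ) (n : ℕ) (x : ℝ) :
    HasDerivAt (genX Ψ (n + 1) x₀)
      (((n : ℂ) + 1) * (genX Ψ n x₀ x * Ψ x ^ ((-1 : ℤ) ^ (n + 1)))) x := by
  have hcf : Continuous fun ξ => genX Ψ n x₀ ξ * Ψ ξ ^ ((-1 : ℤ) ^ (n + 1)) :=
    (genX_continuous hc h0 x₀ n).mul (contPow hc h0 _)
  have h := ((hcf.integral_hasStrictDerivAt x₀ x).hasDerivAt).const_mul ((n + 1 : ℕ) : ℂ)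
  simpa [genX] using h

lemma abs_integral_abs_pow (n : ℕ) (c : ℝ) :
    |∫ u in (0 : ℝ)..c, |u| ^ n| = |c| ^ (n + 1) / (n + 1) := by
  rcases le_or_gt 0 c with hc | hc
  · have h2 : ∫ u in (0 : ℝ)..c, |u| ^ n = ∫ u in (0 : ℝ)..c, u ^ n := by
      apply intervalIntegral.integral_congr
      intro u hu
      rw [Set.uIcc_of_le hc] at hu
      dsimp only
      rw [abs_of_nonneg hu.1]
    rw [h2, integral_pow, abs_of_nonneg hc]
    rw [zero_pow (Nat.succ_ne_zero n), sub_zero, abs_div, abs_pow, abs_of_nonneg hc,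
      abs_of_nonneg (by positivity : (0:ℝ) ≤ (n:ℝ) + 1)]
  · have h1 : ∫ u in (0 : ℝ)..c, |u| ^ n = ∫ u in (0 : ℝ)..c, |(-u)| ^ n := by
      apply intervalIntegral.integral_congr; intro u _; dsimp only; rw [abs_neg]
    rw [h1, intervalIntegral.integral_comp_neg (fun u => |u| ^ n), neg_zero]
    have h2 : ∫ u in (-c)..(0 : ℝ), |u| ^ n = ∫ u in (-c)..(0 : ℝ), u ^ n := by
      apply intervalIntegral.integral_congr
      intro u hu
      rw [Set.uIcc_comm, Set.uIcc_of_le (by linarith : (0:ℝ) ≤ -c)] at hu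
      dsimp only
      rw [abs_of_nonneg hu.1]
    rw [h2, integral_pow, zero_pow (Nat.succ_ne_zero n), zero_sub, abs_div, abs_neg, abs_pow,
      abs_neg, abs_of_nonneg (by positivity : (0:ℝ) ≤ (n:ℝ) + 1)]

lemma genX_norm_le (hc : Continuous Ψ) (h0 : ∀ t, Ψ t ≠ 0)
    (hMa : ∀ t, ‖Ψ t‖ ≤ M) (hMb : ∀ t, ‖(Ψ t)⁻¹‖ ≤ M) (hM0 : 0 ≤ M) (x₀ : ℝ) :
    ∀ n, ∀ x, ‖genX Ψ n x₀ x‖ ≤ (M * |x - x₀|) ^ n := by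
  intro n
  induction n with
  | zero => intro x; simp [genX]
  | succ n ih =>
      intro x
      have key : ‖∫ ξ in x₀..x, genX Ψ n x₀ ξ * Ψ ξ ^ ((-1 : ℤ) ^ (n + 1))‖ ≤
          |∫ ξ in x₀..x, M ^ (n + 1) * |ξ - x₀| ^ n| := by
        apply intervalIntegral.norm_integral_le_abs_of_norm_le
        · apply Filter.Eventually.of_forall
          intro ξ
          rw [norm_mul]
          have h1 : ‖genX Ψ n x₀ ξ‖ ≤ (M * |ξ - x₀|) ^ n := ih ξ
          have h2 : ‖Ψ ξ ^ ((-1 : ℤ) ^ (n + 1))‖ ≤ M := by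
            rcases Nat.even_or_odd (n + 1) with he | ho
            · rw [he.neg_one_pow, zpow_one]; exact hMa ξ
            · rw [ho.neg_one_pow, zpow_neg, zpow_one]; exact hMb ξ
          calc ‖genX Ψ n x₀ ξ‖ * ‖Ψ ξ ^ ((-1 : ℤ) ^ (n + 1))‖
              ≤ (M * |ξ - x₀|) ^ n * M := by
                apply mul_le_mul h1 h2 (norm_nonneg _) (by positivity)
            _ = M ^ (n + 1) * |ξ - x₀| ^ n := by ring
        · exact (Continuous.mul continuous_const
            ((continuous_id.sub continuous_const).abs.pow n)).intervalIntegrable x₀ x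
      have hval : |∫ ξ in x₀..x, M ^ (n + 1) * |ξ - x₀| ^ n| =
          M ^ (n + 1) * (|x - x₀| ^ (n + 1) / (n + 1)) := by
        rw [intervalIntegral.integral_const_mul, abs_mul, abs_pow, abs_of_nonneg hM0]
        congr 1
        have := intervalIntegral.integral_comp_sub_right (fun u => |u| ^ n) x₀
          (a := x₀) (b := x)
        rw [this, sub_self, abs_integral_abs_pow]
      rw [genX, norm_mul, Complex.norm_natCast]
      calc ((n + 1 : ℕ) : ℝ) * ‖∫ ξ in x₀..x, genX Ψ n x₀ ξ * Ψ ξ ^ ((-1 : ℤ) ^ (n + 1))‖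
          ≤ ((n + 1 : ℕ) : ℝ) * (M ^ (n + 1) * (|x - x₀| ^ (n + 1) / (n + 1))) := by
            apply mul_le_mul_of_nonneg_left (key.trans (le_of_eq hval)) (by positivity)
        _ = (M * |x - x₀|) ^ (n + 1) := by
            push_cast
            field_simp
            ring


lemma summable_pow_fac (r : ℝ) {k : ℕ → ℕ} (hk : Function.Injective k) :
    Summable fun j : ℕ => r ^ (k j) / ((k j).factorial : ℝ) :=
  (Real.summable_pow_div_factorial r).comp_injective hk

lemma summable_genX_div (hc : Continuous Ψ) (h0 : ∀ t, Ψ t ≠ 0)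
    (hMa : ∀ t, ‖Ψ t‖ ≤ M) (hMb : ∀ t, ‖(Ψ t)⁻¹‖ ≤ M) (hM0 : 0 ≤ M)
    (x₀ x : ℝ) (c : ℕ) (f : ℕ → ℂ) (hf : ∀ j, ‖f j‖ = 1) :
    Summable fun j : ℕ => f j * genX Ψ (2 * j + c) x₀ x / ((2 * j + c).factorial : ℂ) := by
  apply Summable.of_norm_bounded
    (summable_pow_fac (M * |x - x₀|) (k := fun j => 2 * j + c) (fun i j h => by dsimp only at h; omega))
  intro j
  rw [norm_div, norm_mul, hf, one_mul, Complex.norm_natCast]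
  gcongr
  exact genX_norm_le hc h0 hMa hMb hM0 x₀ _ x

lemma mulAux (c F A s : ℂ) (hc : c ≠ 0) (hF : F ≠ 0) : s * A / F = s / (c * F) * (c * A) := by
  field_simp

lemma zpow_neg_one_pow_even (z : ℂ) {n : ℕ} (h : Even n) : z ^ ((-1 : ℤ) ^ n) = z := by
  rw [h.neg_one_pow, zpow_one]

lemma zpow_neg_one_pow_odd (z : ℂ) {n : ℕ} (h : Odd n) : z ^ ((-1 : ℤ) ^ n) = z⁻¹ := by
  rw [h.neg_one_pow, zpow_neg, zpow_one]

lemma hasDerivAt_genS (hc : Continuous Ψ) (h0 : ∀ t, Ψ t ≠ 0)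
    (hMa : ∀ t, ‖Ψ t‖ ≤ M) (hMb : ∀ t, ‖(Ψ t)⁻¹‖ ≤ M) (hM0 : 0 ≤ M) (x₀ x : ℝ) :
    HasDerivAt (genS Ψ x₀) ((Ψ x)⁻¹ * genC Ψ x₀ x) x := by
  set R := |x - x₀| + 1 with hR
  have hxt : x ∈ Set.Ioo (x₀ - R) (x₀ + R) := by
    constructor <;> [nlinarith [abs_sub_abs_le_abs_sub x x₀, neg_abs_le (x - x₀), le_abs_self (x - x₀)];
      nlinarith [le_abs_self (x - x₀)]]
  have hx₀t : x₀ ∈ Set.Ioo (x₀ - R) (x₀ + R) := by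
    constructor <;> nlinarith [abs_nonneg (x - x₀)]
  have hbd : ∀ y ∈ Set.Ioo (x₀ - R) (x₀ + R), |y - x₀| ≤ R := by
    intro y hy
    rw [abs_le]; constructor <;> [linarith [hy.1]; linarith [hy.2]]
  have hg : ∀ (j : ℕ), ∀ y ∈ Set.Ioo (x₀ - R) (x₀ + R),
      HasDerivAt (fun z => (-1 : ℂ) ^ j * genX Ψ (2 * j + 1) x₀ z / ((2 * j + 1).factorial : ℂ))
        ((-1 : ℂ) ^ j * (genX Ψ (2 * j) x₀ y * (Ψ y)⁻¹) / ((2 * j).factorial : ℂ)) y := by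
    intro j y _
    have H0 := (genX_hasDerivAt hc h0 x₀ (2 * j) y).const_mul
      ((-1 : ℂ) ^ j / ((2 * j + 1).factorial : ℂ))
    have hfun : (fun z => (-1 : ℂ) ^ j / ((2 * j + 1).factorial : ℂ) * genX Ψ (2 * j + 1) x₀ z)
        = fun z => (-1 : ℂ) ^ j * genX Ψ (2 * j + 1) x₀ z / ((2 * j + 1).factorial : ℂ) := by
      funext z; ring
    rw [hfun] at H0
    convert H0 using 1
    · rfl
    have hcast : (((2 * j + 1).factorial : ℂ)) = (((2 * j : ℕ) : ℂ) + 1) * ((2 * j).factorial : ℂ) := by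
      rw [Nat.factorial_succ]; push_cast; ring
    have h1 : (((2 * j).factorial : ℂ)) ≠ 0 := Nat.cast_ne_zero.2 (Nat.factorial_ne_zero _)
    have h2 : (((2 * j : ℕ) : ℂ) + 1) ≠ 0 := by
      have he : ((2 * j : ℕ) : ℂ) + 1 = ((2 * j + 1 : ℕ) : ℂ) := by push_cast; ring
      rw [he]; exact Nat.cast_ne_zero.2 (by omega)
    rw [zpow_neg_one_pow_odd _ ⟨j, by ring⟩, hcast]
    exact mulAux _ _ _ _ h2 h1
  have hg' : ∀ (j : ℕ), ∀ y ∈ Set.Ioo (x₀ - R) (x₀ + R),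
      ‖(-1 : ℂ) ^ j * (genX Ψ (2 * j) x₀ y * (Ψ y)⁻¹) / ((2 * j).factorial : ℂ)‖ ≤
        M * ((M * R) ^ (2 * j + 0) / ((2 * j + 0).factorial : ℝ)) := by
    intro j y hy
    have hXb : ‖genX Ψ (2 * j) x₀ y‖ ≤ (M * R) ^ (2 * j) := by
      refine (genX_norm_le hc h0 hMa hMb hM0 x₀ _ y).trans ?_
      have : M * |y - x₀| ≤ M * R := mul_le_mul_of_nonneg_left (hbd y hy) hM0
      exact pow_le_pow_left₀ (by positivity) this _
    rw [norm_div, norm_mul, norm_mul, norm_pow, norm_neg, norm_one, one_pow, one_mul,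
      Complex.norm_natCast]
    calc ‖genX Ψ (2 * j) x₀ y‖ * ‖(Ψ y)⁻¹‖ / ((2 * j).factorial : ℝ)
        ≤ (M * R) ^ (2 * j) * M / ((2 * j).factorial : ℝ) := by
          gcongr
          exact hMb y
      _ = M * ((M * R) ^ (2 * j + 0) / ((2 * j + 0).factorial : ℝ)) := by ring
  have hu : Summable fun j : ℕ => M * ((M * R) ^ (2 * j + 0) / ((2 * j + 0).factorial : ℝ)) :=
    (summable_pow_fac (M * R) (k := fun j => 2 * j + 0) (fun i j h => by dsimp only at h; omega)).mul_left M
  have hg0 : Summable fun j : ℕ =>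
      (-1 : ℂ) ^ j * genX Ψ (2 * j + 1) x₀ x₀ / ((2 * j + 1).factorial : ℂ) :=
    summable_genX_div hc h0 hMa hMb hM0 x₀ x₀ 1 _ (fun j => by
      rw [norm_pow, norm_neg, norm_one, one_pow])
  have H := hasDerivAt_tsum_of_isPreconnected hu isOpen_Ioo (convex_Ioo _ _).isPreconnected
    hg hg' hx₀t hg0 hxt
  have heq : genS Ψ x₀ = fun z => ∑' j : ℕ,
      (-1 : ℂ) ^ j * genX Ψ (2 * j + 1) x₀ z / ((2 * j + 1).factorial : ℂ) := rfl
  rw [heq]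
  convert H using 1
  · rfl
  have hterm : ∀ j : ℕ, (-1 : ℂ) ^ j * (genX Ψ (2 * j) x₀ x * (Ψ x)⁻¹) / ((2 * j).factorial : ℂ)
      = (Ψ x)⁻¹ * ((-1 : ℂ) ^ j * genX Ψ (2 * j) x₀ x / ((2 * j).factorial : ℂ)) := by
    intro j; ring
  rw [tsum_congr hterm, tsum_mul_left]
  rfl

lemma hasDerivAt_genC (hc : Continuous Ψ) (h0 : ∀ t, Ψ t ≠ 0)
    (hMa : ∀ t, ‖Ψ t‖ ≤ M) (hMb : ∀ t, ‖(Ψ t)⁻¹‖ ≤ M) (hM0 : 0 ≤ M) (x₀ x : ℝ) :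
    HasDerivAt (genC Ψ x₀) (-(Ψ x * genS Ψ x₀ x)) x := by
  set R := |x - x₀| + 1 with hR
  have hxt : x ∈ Set.Ioo (x₀ - R) (x₀ + R) := by
    constructor <;> nlinarith [neg_abs_le (x - x₀), le_abs_self (x - x₀)]
  have hx₀t : x₀ ∈ Set.Ioo (x₀ - R) (x₀ + R) := by
    constructor <;> nlinarith [abs_nonneg (x - x₀)]
  have hbd : ∀ y ∈ Set.Ioo (x₀ - R) (x₀ + R), |y - x₀| ≤ R := by
    intro y hy
    rw [abs_le]; constructor <;> [linarith [hy.1]; linarith [hy.2]]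
  have hg : ∀ (j : ℕ), ∀ y ∈ Set.Ioo (x₀ - R) (x₀ + R),
      HasDerivAt (fun z => (-1 : ℂ) ^ (j + 1) * genX Ψ (2 * j + 2) x₀ z / ((2 * j + 2).factorial : ℂ))
        ((-1 : ℂ) ^ (j + 1) * (genX Ψ (2 * j + 1) x₀ y * Ψ y) / ((2 * j + 1).factorial : ℂ)) y := by
    intro j y _
    have H0 := (genX_hasDerivAt hc h0 x₀ (2 * j + 1) y).const_mul
      ((-1 : ℂ) ^ (j + 1) / ((2 * j + 2).factorial : ℂ))
    have hfun : (fun z => (-1 : ℂ) ^ (j + 1) / ((2 * j + 2).factorial : ℂ) * genX Ψ (2 * j + 1 + 1) x₀ z)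
        = fun z => (-1 : ℂ) ^ (j + 1) * genX Ψ (2 * j + 2) x₀ z / ((2 * j + 2).factorial : ℂ) := by
      funext z; ring
    rw [hfun] at H0
    convert H0 using 1
    · rfl
    have hfac : ((2 * j + 2).factorial : ℂ) = (((2 * j + 1 : ℕ) : ℂ) + 1) * ((2 * j + 1).factorial : ℂ) := by
      rw [show (2 * j + 2) = (2 * j + 1) + 1 from rfl, Nat.factorial_succ]
      push_cast; ring
    have h1 : (((2 * j + 1).factorial : ℂ)) ≠ 0 := Nat.cast_ne_zero.2 (Nat.factorial_ne_zero _)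
    have h2 : (((2 * j + 1 : ℕ) : ℂ) + 1) ≠ 0 := by
      have he : ((2 * j + 1 : ℕ) : ℂ) + 1 = ((2 * j + 2 : ℕ) : ℂ) := by push_cast; ring
      rw [he]; exact Nat.cast_ne_zero.2 (by omega)
    rw [zpow_neg_one_pow_even _ (⟨j + 1, by ring⟩ : Even (2 * j + 1 + 1)), hfac]
    exact mulAux _ _ _ _ h2 h1
  have hg' : ∀ (j : ℕ), ∀ y ∈ Set.Ioo (x₀ - R) (x₀ + R),
      ‖(-1 : ℂ) ^ (j + 1) * (genX Ψ (2 * j + 1) x₀ y * Ψ y) / ((2 * j + 1).factorial : ℂ)‖ ≤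
        M * ((M * R) ^ (2 * j + 1) / ((2 * j + 1).factorial : ℝ)) := by
    intro j y hy
    have hXb : ‖genX Ψ (2 * j + 1) x₀ y‖ ≤ (M * R) ^ (2 * j + 1) := by
      refine (genX_norm_le hc h0 hMa hMb hM0 x₀ _ y).trans ?_
      have : M * |y - x₀| ≤ M * R := mul_le_mul_of_nonneg_left (hbd y hy) hM0
      exact pow_le_pow_left₀ (by positivity) this _
    rw [norm_div, norm_mul, norm_mul, norm_pow, norm_neg, norm_one, one_pow, one_mul,
      Complex.norm_natCast]
    calc ‖genX Ψ (2 * j + 1) x₀ y‖ * ‖Ψ y‖ / ((2 * j + 1).factorial : ℝ)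
        ≤ (M * R) ^ (2 * j + 1) * M / ((2 * j + 1).factorial : ℝ) := by
          gcongr
          exact hMa y
      _ = M * ((M * R) ^ (2 * j + 1) / ((2 * j + 1).factorial : ℝ)) := by ring
  have hu : Summable fun j : ℕ => M * ((M * R) ^ (2 * j + 1) / ((2 * j + 1).factorial : ℝ)) :=
    (summable_pow_fac (M * R) (k := fun j => 2 * j + 1) (fun i j h => by dsimp only at h; omega)).mul_left M
  have hnorm1 : ∀ j : ℕ, ‖(-1 : ℂ) ^ (j + 1)‖ = 1 := fun j => by
    rw [norm_pow, norm_neg, norm_one, one_pow]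
  have hg0 : Summable fun j : ℕ =>
      (-1 : ℂ) ^ (j + 1) * genX Ψ (2 * j + 2) x₀ x₀ / ((2 * j + 2).factorial : ℂ) :=
    summable_genX_div hc h0 hMa hMb hM0 x₀ x₀ 2 _ hnorm1
  have H := hasDerivAt_tsum_of_isPreconnected hu isOpen_Ioo (convex_Ioo _ _).isPreconnected
    hg hg' hx₀t hg0 hxt
  have Hfull : HasDerivAt (fun z => (1 : ℂ) + ∑' j : ℕ,
      (-1 : ℂ) ^ (j + 1) * genX Ψ (2 * j + 2) x₀ z / ((2 * j + 2).factorial : ℂ))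
      (0 + ∑' j : ℕ, (-1 : ℂ) ^ (j + 1) * (genX Ψ (2 * j + 1) x₀ x * Ψ x) /
        ((2 * j + 1).factorial : ℂ)) x := (hasDerivAt_const x (1 : ℂ)).add H
  have heq : genC Ψ x₀ = fun z => (1 : ℂ) + ∑' j : ℕ,
      (-1 : ℂ) ^ (j + 1) * genX Ψ (2 * j + 2) x₀ z / ((2 * j + 2).factorial : ℂ) := by
    funext z
    have hs : Summable fun j : ℕ =>
        (-1 : ℂ) ^ j * genX Ψ (2 * j) x₀ z / ((2 * j).factorial : ℂ) :=
      summable_genX_div hc h0 hMa hMb hM0 x₀ z 0 _ (fun j => by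
        rw [norm_pow, norm_neg, norm_one, one_pow])
    rw [genC, Summable.tsum_eq_zero_add hs]
    congr 1
    simp [genX]
  rw [heq]
  convert Hfull using 1
  rw [zero_add]
  have hterm : ∀ j : ℕ, (-1 : ℂ) ^ (j + 1) * (genX Ψ (2 * j + 1) x₀ x * Ψ x) /
      ((2 * j + 1).factorial : ℂ)
      = -(Ψ x) * ((-1 : ℂ) ^ j * genX Ψ (2 * j + 1) x₀ x / ((2 * j + 1).factorial : ℂ)) := by
    intro j; rw [pow_succ]; ring
  rw [tsum_congr hterm, tsum_mul_left]
  show -(Ψ x * genS Ψ x₀ x) = -(Ψ x) * genS Ψ x₀ x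
  ring

lemma key_identity (hc : Continuous Ψ) (h0 : ∀ t, Ψ t ≠ 0)
    (hMa : ∀ t, ‖Ψ t‖ ≤ M) (hMb : ∀ t, ‖(Ψ t)⁻¹‖ ≤ M) (hM0 : 0 ≤ M) (x₀ x : ℝ) :
    genC Ψ x₀ x * genC (fun t => (Ψ t)⁻¹) x₀ x +
      genS Ψ x₀ x * genS (fun t => (Ψ t)⁻¹) x₀ x = 1 := by
  have hc' : Continuous fun t => (Ψ t)⁻¹ := hc.inv₀ h0
  have h0' : ∀ t, (fun t => (Ψ t)⁻¹) t ≠ 0 := fun t => inv_ne_zero (h0 t)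
  have hMa' : ∀ t, ‖(fun t => (Ψ t)⁻¹) t‖ ≤ M := hMb
  have hMb' : ∀ t, ‖((fun t => (Ψ t)⁻¹) t)⁻¹‖ ≤ M := fun t => by
    show ‖((Ψ t)⁻¹)⁻¹‖ ≤ M; rw [inv_inv]; exact hMa t
  have hG : ∀ y, HasDerivAt (fun z => genC Ψ x₀ z * genC (fun t => (Ψ t)⁻¹) x₀ z +
      genS Ψ x₀ z * genS (fun t => (Ψ t)⁻¹) x₀ z) 0 y := by
    intro y
    have h1 := hasDerivAt_genC hc h0 hMa hMb hM0 x₀ y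
    have h2 := hasDerivAt_genC hc' h0' hMa' hMb' hM0 x₀ y
    have h3 := hasDerivAt_genS hc h0 hMa hMb hM0 x₀ y
    have h4 := hasDerivAt_genS hc' h0' hMa' hMb' hM0 x₀ y
    have h5 := (h1.mul h2).add (h3.mul h4)
    convert h5 using 1
    · rfl
    · rfl
    simp only [inv_inv]
    ring
  have hconst := is_const_of_deriv_eq_zero (f := fun z => genC Ψ x₀ z *
      genC (fun t => (Ψ t)⁻¹) x₀ z + genS Ψ x₀ z * genS (fun t => (Ψ t)⁻¹) x₀ z)
    (fun y => (hG y).differentiableAt) (fun y => (hG y).deriv) x x₀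
  have hval : genC Ψ x₀ x₀ * genC (fun t => (Ψ t)⁻¹) x₀ x₀ +
      genS Ψ x₀ x₀ * genS (fun t => (Ψ t)⁻¹) x₀ x₀ = 1 := by
    rw [genC_self, genC_self, genS_self, genS_self]; ring
  exact hconst.trans hval

end Nice

theorem stmt_10 (a b : ℝ) (Φ : ℝ → ℂ) (hΦc : ContinuousOn Φ (Set.Icc a b))
    (hΦ0 : ∀ y ∈ Set.Icc a b, Φ y ≠ 0) (x₀ x : ℝ)
    (hx₀ : x₀ ∈ Set.Icc a b) (hx : x ∈ Set.Icc a b) :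
    genC Φ x₀ x * genCt Φ x₀ x + genS Φ x₀ x * genSt Φ x₀ x = 1 := by
  have hab : a ≤ b := hx₀.1.trans hx₀.2
  have hcl_mem : ∀ t : ℝ, max a (min b t) ∈ Set.Icc a b := fun t =>
    ⟨le_max_left _ _, max_le hab (min_le_left _ _)⟩
  have hcl_cont : Continuous fun t : ℝ => max a (min b t) :=
    continuous_const.max (continuous_const.min continuous_id)
  set Ψ : ℝ → ℂ := fun t => Φ (max a (min b t)) with hΨdef
  have hΨc : Continuous Ψ := hΦc.comp_continuous hcl_cont hcl_mem
  have hΨ0 : ∀ t, Ψ t ≠ 0 := fun t => hΦ0 _ (hcl_mem t)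
  have hΨeq : ∀ y ∈ Set.Icc a b, Φ y = Ψ y := by
    intro y hy
    show Φ y = Φ (max a (min b y))
    rw [min_eq_right hy.2, max_eq_right hy.1]
  obtain ⟨C, hC⟩ := (isCompact_Icc (a := a) (b := b)).exists_bound_of_continuousOn
    (f := fun y => max ‖Φ y‖ ‖(Φ y)⁻¹‖) ((hΦc.norm).sup ((hΦc.inv₀ hΦ0).norm))
  have hmaxle : ∀ y ∈ Set.Icc a b, max ‖Φ y‖ ‖(Φ y)⁻¹‖ ≤ C := by
    intro y hy
    have h := hC y hy
    rw [Real.norm_eq_abs] at h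
    exact (le_abs_self _).trans h
  have hMa : ∀ t, ‖Ψ t‖ ≤ C := fun t =>
    (le_max_left _ _).trans (hmaxle _ (hcl_mem t))
  have hMb : ∀ t, ‖(Ψ t)⁻¹‖ ≤ C := fun t =>
    (le_max_right _ _).trans (hmaxle _ (hcl_mem t))
  have hM0 : 0 ≤ C := (norm_nonneg (Ψ 0)).trans (hMa 0)
  have hCeq : genC Φ x₀ x = genC Ψ x₀ x :=
    tsum_congr fun j => by rw [genX_congr hΨeq hx₀ _ x hx]
  have hSeq : genS Φ x₀ x = genS Ψ x₀ x :=
    tsum_congr fun j => by rw [genX_congr hΨeq hx₀ _ x hx]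
  have hinv : ∀ y ∈ Set.Icc a b, (fun t => (Φ t)⁻¹) y = (fun t => (Ψ t)⁻¹) y := by
    intro y hy
    dsimp only
    rw [hΨeq y hy]
  have hCteq : genCt Φ x₀ x = genC (fun t => (Ψ t)⁻¹) x₀ x :=
    tsum_congr fun k => by
      rw [genXt_eq_genX_inv, genX_congr hinv hx₀ _ x hx]
  have hSteq : genSt Φ x₀ x = genS (fun t => (Ψ t)⁻¹) x₀ x :=
    tsum_congr fun k => by
      rw [genXt_eq_genX_inv, genX_congr hinv hx₀ _ x hx]
  rw [hCeq, hSeq, hCteq, hSteq]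
  exact key_identity hΨc hΨ0 hMa hMb hM0 x₀ x
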